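/- For each n ≥ 0 and all real x, q_{2n}(x) = (-1)^n · (1+x²)^{n+1/2} · T_{2n+1}(1/√(1+x²)), where T_m denotes the m-th Chebyshev polynomial of the first kind. -/
import Mathlib


open Finset Polynomial Real

noncomputable def q (n : ℕ) (x : ℝ) : ℝ :=
  (-1 : ℝ)^n * ∑ k ∈ (Finset.range (n+1)).filter (fun k => Even k),
    ((n+1).choose (k+1) : ℝ) * (-1 : ℝ)^(k/2) * x^(n-k)

lemma sum_filter_even (N : ℕ) (f : ℕ → ℝ) :
    ∑ k ∈ (Finset.range (2*N+1)).filter (fun k => Even k), f k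
      = ∑ i ∈ Finset.range (N+1), f (2*i) := by
  apply Finset.sum_nbij' (fun k => k / 2) (fun i => 2 * i)
  · intro k hk
    simp only [Finset.mem_filter, Finset.mem_range] at hk ⊢
    omega
  · intro i hi
    simp only [Finset.mem_filter, Finset.mem_range] at hi ⊢
    exact ⟨by omega, even_two_mul i⟩
  · intro k hk
    simp only [Finset.mem_filter, Finset.mem_range] at hk
    obtain ⟨_, m, hm⟩ := hk
    omega
  · intro i _; omega
  · intro k hk
    simp only [Finset.mem_filter, Finset.mem_range] at hk
    obtain ⟨_, m, hm⟩ := hk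
    congr 1; omega

lemma re_pow (n : ℕ) (x : ℝ) :
    ((1 + (x:ℂ) * Complex.I)^(2*n+1)).re
      = ∑ i ∈ Finset.range (n+1),
          ((2*n+1).choose (2*i) : ℝ) * (-1 : ℝ)^i * x^(2*i) := by
  rw [add_comm, add_pow, Complex.re_sum]
  have h1 : ∀ j ∈ Finset.range (2*n+1+1),
      (((x:ℂ) * Complex.I)^j * 1^(2*n+1-j) * ((2*n+1).choose j : ℂ)).re
        = x^j * ((2*n+1).choose j : ℝ) * (Complex.I^j).re := by
    intro j _
    rw [one_pow, mul_one, mul_pow]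
    rw [show ((x:ℂ))^j * Complex.I^j * ((2*n+1).choose j : ℂ)
        = ((x^j * ((2*n+1).choose j : ℝ) : ℝ) : ℂ) * Complex.I^j by push_cast; ring]
    rw [Complex.re_ofReal_mul]
  rw [Finset.sum_congr rfl h1]
  have hodd : ∀ j, ¬ Even j → (Complex.I^j).re = 0 := by
    intro j hj
    obtain ⟨m, hm⟩ := Nat.not_even_iff_odd.mp hj
    subst hm
    rw [show Complex.I^(2*m+1) = (((-1:ℝ)^m : ℝ) : ℂ) * Complex.I by
      rw [pow_add, pow_mul, Complex.I_sq, pow_one]; push_cast; ring]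
    rw [Complex.re_ofReal_mul, Complex.I_re, mul_zero]
  have h3 : ∑ j ∈ Finset.range (2*n+1+1), x^j * ((2*n+1).choose j : ℝ) * (Complex.I^j).re
      = ∑ j ∈ (Finset.range (2*n+1+1)).filter (fun k => Even k),
          x^j * ((2*n+1).choose j : ℝ) * (Complex.I^j).re := by
    rw [Finset.sum_filter_of_ne]
    intro j _ hne
    by_contra hj
    exact hne (by rw [hodd j hj]; ring)
  rw [h3]
  have h4 : (Finset.range (2*n+1+1)).filter (fun k => Even k)
      = (Finset.range (2*n+1)).filter (fun k => Even k) := by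
    ext k
    simp only [Finset.mem_filter, Finset.mem_range]
    constructor
    · rintro ⟨hk, m, hm⟩; exact ⟨by omega, m, hm⟩
    · rintro ⟨hk, he⟩; exact ⟨by omega, he⟩
  rw [h4, sum_filter_even n (fun j => x^j * ((2*n+1).choose j : ℝ) * (Complex.I^j).re)]
  apply Finset.sum_congr rfl
  intro i _
  have hI : (Complex.I^(2*i)).re = (-1:ℝ)^i := by
    rw [pow_mul, Complex.I_sq,
      show ((-1:ℂ))^i = (((-1:ℝ)^i : ℝ) : ℂ) by push_cast; ring]
    exact Complex.ofReal_re _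
  rw [hI]; ring

lemma q_eq (n : ℕ) (x : ℝ) :
    q (2*n) x = (-1:ℝ)^n * ∑ i ∈ Finset.range (n+1),
        ((2*n+1).choose (2*i) : ℝ) * (-1 : ℝ)^i * x^(2*i) := by
  unfold q
  have h0 : (-1:ℝ)^(2*n) = 1 := by rw [pow_mul]; norm_num
  rw [h0, one_mul]
  rw [show (2*n+1 : ℕ) = 2*n+1 from rfl]
  rw [sum_filter_even n (fun k => (((2*n+1).choose (k+1)) : ℝ) * (-1:ℝ)^(k/2) * x^(2*n-k))]
  rw [← Finset.sum_range_reflect, Finset.mul_sum]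
  apply Finset.sum_congr rfl
  intro i hi
  simp only [Finset.mem_range] at hi
  have hi' : i ≤ n := by omega
  simp only [Nat.add_sub_cancel]
  have hc : (2*n+1).choose (2*(n-i)+1) = (2*n+1).choose (2*i) := by
    rw [← Nat.choose_symm (by omega : 2*(n-i)+1 ≤ 2*n+1)]
    congr 1; omega
  have hd : (2*(n-i))/2 = n - i := by omega
  have he : 2*n - 2*(n-i) = 2*i := by omega
  rw [hd, he, hc]
  have hs : (-1:ℝ)^(n-i) = (-1:ℝ)^n * (-1:ℝ)^i := by
    rw [pow_sub₀ (-1:ℝ) (by norm_num) hi', ← inv_pow, inv_neg, inv_one]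
  rw [hs]; ring

lemma exp_form (n : ℕ) (x : ℝ) :
    ((1 + (x:ℂ) * Complex.I)^(2*n+1)).re
      = ((1 + x^2)^n * Real.sqrt (1 + x^2)) * Real.cos ((2*n+1) * Real.arctan x) := by
  have hpos : (0:ℝ) < 1 + x^2 := by positivity
  have hr : (0:ℝ) < Real.sqrt (1 + x^2) := Real.sqrt_pos.mpr hpos
  have hkey : (1 + (x:ℂ) * Complex.I)
      = (Real.sqrt (1 + x^2) : ℝ) * Complex.exp ((Real.arctan x : ℝ) * Complex.I) := by
    have hexp : Complex.exp ((Real.arctan x : ℝ) * Complex.I)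
        = ((Real.cos (Real.arctan x) : ℝ) : ℂ) + ((Real.sin (Real.arctan x) : ℝ) : ℂ) * Complex.I := by
      rw [Complex.ofReal_cos, Complex.ofReal_sin, Complex.exp_mul_I]
    rw [hexp, Real.cos_arctan, Real.sin_arctan]
    apply Complex.ext <;> simp <;> field_simp
  rw [hkey, mul_pow, ← Complex.exp_nat_mul]
  have : ((2*n+1 : ℕ) : ℂ) * ((Real.arctan x : ℝ) * Complex.I)
      = (((2*n+1 : ℕ) * Real.arctan x : ℝ) : ℂ) * Complex.I := by
    push_cast; ring
  rw [this]
  rw [show ((Real.sqrt (1+x^2) : ℝ) : ℂ)^(2*n+1) = ((Real.sqrt (1+x^2)^(2*n+1) : ℝ) : ℂ) by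
    push_cast; ring]
  rw [Complex.re_ofReal_mul, Complex.exp_ofReal_mul_I_re]
  have hsq : Real.sqrt (1+x^2)^(2*n+1) = (1+x^2)^n * Real.sqrt (1+x^2) := by
    rw [pow_succ, pow_mul, Real.sq_sqrt hpos.le]
  rw [hsq]
  push_cast
  ring_nf

theorem q_even_chebyshevT (n : ℕ) (x : ℝ) :
    q (2 * n) x = (-1 : ℝ)^n * ((1 + x^2)^n * Real.sqrt (1 + x^2)) *
      (Polynomial.Chebyshev.T ℝ (2 * n + 1)).eval (1 / Real.sqrt (1 + x^2)) := by
  have h1 : (1 : ℝ) / Real.sqrt (1 + x^2) = Real.cos (Real.arctan x) :=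
    (Real.cos_arctan x).symm
  rw [h1, Polynomial.Chebyshev.T_real_cos]
  rw [q_eq, ← re_pow, exp_form]
  push_cast
  ring_nf
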